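/- A value v in D_i has support in the MDD constraint if and only if there exists an edge e lying on some root-to-terminal path such that either s(e) = i and v(e) = v, or s(e) < i < d(e), or i < l(root). -/

import Mathlib

/-- A path in a labeled multigraph: `Reaches E u Q w` means the list of edges `Q`
(each edge a triple (source, value label, destination)) forms a path from `u` to `w`. -/
inductive Reaches {V : Type} (E : Finset (V × ℕ × V)) : V → List (V × ℕ × V) → V → Prop
  | nil (u : V) : Reaches E u [] u
  | cons {u c w : V} {v : ℕ} {Q : List (V × ℕ × V)} :
      (u, v, c) ∈ E → Reaches E c Q w → Reaches E u ((u, v, c) :: Q) w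

lemma reaches_mem {V : Type} {E : Finset (V × ℕ × V)} {u w : V} {Q : List (V × ℕ × V)}
    (h : Reaches E u Q w) : ∀ e ∈ Q, e ∈ E := by
  induction h with
  | nil => simp
  | cons he _ ih =>
      intro e hq
      rcases List.mem_cons.1 hq with h | h
      · exact h ▸ he
      · exact ih e h

lemma reaches_cover {V : Type} {E : Finset (V × ℕ × V)} (layer : V → ℕ)
    {u w : V} {Q : List (V × ℕ × V)} (h : Reaches E u Q w) :
    ∀ j, layer u ≤ j → j < layer w → ∃ e ∈ Q, layer e.1 ≤ j ∧ j < layer e.2.2 := by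
  induction h with
  | nil => intro j h1 h2; omega
  | @cons u c w v Q he hr ih =>
      intro j h1 h2
      by_cases hc : j < layer c
      · exact ⟨(u, v, c), List.mem_cons_self, h1, hc⟩
      · obtain ⟨e, heQ, h3, h4⟩ := ih j (by omega) h2
        exact ⟨e, List.mem_cons_of_mem _ heQ, h3, h4⟩


/-- The set of solutions of an MDD with long-edge semantics: a full assignment
`ρ` (with `ρ i ∈ D i` for `1 ≤ i ≤ n`) is a solution iff there is a root-to-terminal
path `Q` such that for each layer `i` either some edge of `Q` leaves layer `i` with
label `ρ i`, or `i` is earlier than the root's layer, or some (long) edge of `Q`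
strictly skips layer `i`. -/
def Sols {V : Type} (n : ℕ) (D : ℕ → Finset ℕ) (E : Finset (V × ℕ × V))
    (layer : V → ℕ) (root terminal : V) : Set (ℕ → ℕ) :=
  { ρ | (∀ i ∈ Finset.Icc 1 n, ρ i ∈ D i) ∧
    ∃ Q, Reaches E root Q terminal ∧
      ∀ i ∈ Finset.Icc 1 n,
        (∃ e ∈ Q, layer e.1 = i ∧ e.2.1 = ρ i) ∨ i < layer root ∨
        (∃ e ∈ Q, layer e.1 < i ∧ i < layer e.2.2) }

/-- A value `v ∈ D i` has support in the MDD constraint (some solution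
assigns `v` to `x i`) if and only if there exists a root-to-terminal path `Q` and an edge
`e` on `Q` such that either `e` leaves layer `i` with label `v`, or `e` strictly skips
layer `i`, or else `i` is earlier than the root's layer. -/
theorem stmt4 {V : Type} (n : ℕ) (D : ℕ → Finset ℕ) (E : Finset (V × ℕ × V))
    (layer : V → ℕ) (root terminal : V)
    (hlt : ∀ e ∈ E, layer e.1 < layer e.2.2)
    (hlab : ∀ e ∈ E, e.2.1 ∈ D (layer e.1))
    (hD : ∀ i ∈ Finset.Icc 1 n, (D i).Nonempty)
    (hterm : layer terminal = n + 1)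
    (i v : ℕ) (hi : i ∈ Finset.Icc 1 n) (hv : v ∈ D i) :
    (∃ ρ ∈ Sols n D E layer root terminal, ρ i = v) ↔
      ∃ Q, Reaches E root Q terminal ∧
        ((∃ e ∈ Q, (layer e.1 = i ∧ e.2.1 = v) ∨ (layer e.1 < i ∧ i < layer e.2.2)) ∨
          i < layer root) := by
  classical
  constructor
  · rintro ⟨ρ, ⟨_, Q, hQ, hcond⟩, hρi⟩
    refine ⟨Q, hQ, ?_⟩
    rcases hcond i hi with ⟨e, heQ, h1, h2⟩ | h | ⟨e, heQ, h1, h2⟩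
    · exact Or.inl ⟨e, heQ, Or.inl ⟨h1, hρi ▸ h2⟩⟩
    · exact Or.inr h
    · exact Or.inl ⟨e, heQ, Or.inr ⟨h1, h2⟩⟩
  · rintro ⟨Q, hQ, hcond⟩
    set ρ : ℕ → ℕ := fun j =>
      if j = i then v
      else if h : ∃ e, e ∈ Q ∧ layer e.1 = j then h.choose.2.1
      else if hj : j ∈ Finset.Icc 1 n then (hD j hj).choose else 0 with hρ
    have hρi : ρ i = v := by simp [hρ]
    refine ⟨ρ, ⟨?_, Q, hQ, ?_⟩, hρi⟩
    · intro j hj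
      by_cases hji : j = i
      · subst hji; simpa [hρ] using hv
      · by_cases h : ∃ e, e ∈ Q ∧ layer e.1 = j
        · have := h.choose_spec
          have hρj : ρ j = h.choose.2.1 := by
            rw [hρ]; simp only []; rw [if_neg hji, dif_pos h]
          rw [hρj]
          have := hlab h.choose (reaches_mem hQ _ this.1)
          rwa [h.choose_spec.2] at this
        · have hρj : ρ j = (hD j hj).choose := by
            rw [hρ]; simp only []; rw [if_neg hji, dif_neg h, dif_pos hj]
          rw [hρj]; exact (hD j hj).choose_spec
    · intro j hj
      by_cases hji : j = i
      · subst hji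
        rcases hcond with ⟨e, heQ, ⟨h1, h2⟩ | ⟨h1, h2⟩⟩ | h
        · exact Or.inl ⟨e, heQ, h1, by rw [hρi, h2]⟩
        · exact Or.inr (Or.inr ⟨e, heQ, h1, h2⟩)
        · exact Or.inr (Or.inl h)
      · by_cases h : ∃ e, e ∈ Q ∧ layer e.1 = j
        · have hs := h.choose_spec
          have hρj : ρ j = h.choose.2.1 := by
            rw [hρ]; simp only []; rw [if_neg hji, dif_pos h]
          exact Or.inl ⟨h.choose, hs.1, hs.2, hρj.symm⟩
        · by_cases hr : j < layer root
          · exact Or.inr (Or.inl hr)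
          · have hjn : j ≤ n := (Finset.mem_Icc.1 hj).2
            have hrle : layer root ≤ j := le_of_not_gt hr
            have hjt : j < layer terminal := by rw [hterm]; omega
            obtain ⟨e, heQ, h1, h2⟩ := reaches_cover layer hQ j hrle hjt
            have : layer e.1 ≠ j := fun hc => h ⟨e, heQ, hc⟩
            exact Or.inr (Or.inr ⟨e, heQ, by omega, h2⟩)
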